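/- Let q be an odd prime power, let F be the finite field with q elements, and let x be an element of order 3 in PSL_2(q) := SL_2(F) / Z(SL_2(F)). Then x normalizes some nontrivial 2-subgroup of PSL_2(q). -/

import Mathlib

lemma CH2 {F : Type*} [CommRing F] (M : Matrix (Fin 2) (Fin 2) F) :
    M * M = (M 0 0 + M 1 1) • M - (M.det) • 1 := by
  ext i j
  fin_cases i <;> fin_cases j <;>
    simp [Matrix.mul_apply, Fin.sum_univ_two, Matrix.det_fin_two, Matrix.one_apply] <;> ring

open Polynomial in
lemma key_abc {F : Type*} [Field F] [Fintype F] (hodd : Fintype.card F % 2 = 1)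
    (h2 : (2:F) ≠ 0) (k u r : F)
    (hk : k^2 + 4*(u*r) = -3) (hno : ¬(u = 0 ∧ r = 0 ∧ k = 0)) :
    ∃ a b c : F, a^2 + b*c = -1 ∧ k*a + r*b + u*c = 1 := by
  have h4 : (4:F) ≠ 0 := by
    have := mul_ne_zero h2 h2; norm_num at this ⊢; exact this
  by_cases hu : u = 0
  · subst hu
    have hk3 : k^2 = -3 := by linear_combination hk
    by_cases hr : r = 0
    · subst hr
      have hkne : k ≠ 0 := fun h => hno ⟨rfl, rfl, h⟩
      refine ⟨1/k, 1, -1 - (1/k)^2, ?_, ?_⟩ <;> field_simp <;> ring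
    · exact ⟨0, 1/r, -r, by field_simp; ring, by field_simp; ring⟩
  · by_cases hr : r = 0
    · subst hr
      have hk3 : k^2 = -3 := by linear_combination hk
      by_cases hk0 : k = 0
      · refine ⟨0, -u, 1/u, ?_, ?_⟩ <;> field_simp <;> ring
      · refine ⟨2/k, u*((2/k)^2+1), -1/u, ?_, ?_⟩
        · field_simp; ring
        · field_simp; ring
    · have hea : ∃ e a : F, e^2 + (3*a^2 + 2*k*a + (k^2+2)) = 0 := by
        by_cases h3 : (3:F) = 0
        · have hkne : k ≠ 0 := by
            intro h
            have h4ur : (4:F)*(u*r) = 0 := by linear_combination hk - h3 - k*h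
            rcases mul_eq_zero.mp h4ur with h' | h'
            · exact h4 h'
            · rcases mul_eq_zero.mp h' with h'' | h''
              · exact hu h''
              · exact hr h''
          refine ⟨0, -(k^2+2)/(2*k), ?_⟩
          field_simp
          linear_combination (-2 - k^2)^2 * h3
        · obtain ⟨e, a, hea⟩ := FiniteField.exists_root_sum_quadratic
            (f := X^2) (g := C 3 * X^2 + C (2*k) * X + C (k^2+2))
            (Polynomial.degree_X_pow 2) (Polynomial.degree_quadratic h3) hodd
          refine ⟨e, a, ?_⟩
          simpa using hea
      obtain ⟨e, a, hea⟩ := hea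
      refine ⟨a, ((1 - k*a) + e)/(2*r), (1 - k*a - r*(((1 - k*a) + e)/(2*r)))/u, ?_, ?_⟩
      · field_simp
        linear_combination (a^2+1)*hk - hea
      · field_simp; ring
lemma quat_subgroup {G : Type*} [Group G] (z A B : G)
    (hz : ∀ g : G, z * g = g * z)
    (hz2 : z * z = 1) (hA : A * A = z) (hB : B * B = z)
    (hBA : B * A = z * (A * B)) :
    ∃ S : Subgroup G, (S : Set G) = {1, z, A, z*A, B, z*B, A*B, z*(A*B)}
      ∧ ∀ g ∈ S, g ^ 4 = 1 := by
  have l1 : ∀ w, z*(z*w) = w := fun w => by rw [← mul_assoc, hz2, one_mul]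
  have l2 : ∀ w, A*(A*w) = z*w := fun w => by rw [← mul_assoc, hA]
  have l3 : ∀ w, B*(B*w) = z*w := fun w => by rw [← mul_assoc, hB]
  have l4 : ∀ w, B*(A*w) = z*(A*(B*w)) := fun w => by
    rw [← mul_assoc, hBA, mul_assoc, mul_assoc]
  have l5 : A*z = z*A := (hz A).symm
  have l6 : ∀ w, A*(z*w) = z*(A*w) := fun w => by rw [← mul_assoc, l5, mul_assoc]
  have l7 : B*z = z*B := (hz B).symm
  have l8 : ∀ w, B*(z*w) = z*(B*w) := fun w => by rw [← mul_assoc, l7, mul_assoc]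
  refine ⟨{ carrier := {1, z, A, z*A, B, z*B, A*B, z*(A*B)},
            one_mem' := by simp,
            mul_mem' := ?_,
            inv_mem' := ?_ }, rfl, ?_⟩
  · rintro a b ha hb
    simp only [Set.mem_insert_iff, Set.mem_singleton_iff] at ha hb ⊢
    rcases ha with rfl|rfl|rfl|rfl|rfl|rfl|rfl|rfl <;>
      rcases hb with rfl|rfl|rfl|rfl|rfl|rfl|rfl|rfl <;>
        simp [mul_assoc, l1, l2, l3, l4, l6, l8, hz2, hA, hB, hBA, l5, l7]
  · rintro a ha
    simp only [Set.mem_insert_iff, Set.mem_singleton_iff] at ha ⊢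
    have inv1 : ∀ g w : G, g * w = 1 → g⁻¹ = w := fun g w h => inv_eq_of_mul_eq_one_right h
    rcases ha with h|h|h|h|h|h|h|h <;> rw [h]
    · simp
    · rw [inv1 z z hz2]; simp
    · rw [inv1 A (z*A) (by simp [mul_assoc, l1, l2, l3, l4, l6, l8, hz2, hA, hB, hBA, l5, l7])]; simp
    · rw [inv1 (z*A) A (by simp [mul_assoc, l1, l2, l3, l4, l6, l8, hz2, hA, hB, hBA, l5, l7])]; simp
    · rw [inv1 B (z*B) (by simp [mul_assoc, l1, l2, l3, l4, l6, l8, hz2, hA, hB, hBA, l5, l7])]; simp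
    · rw [inv1 (z*B) B (by simp [mul_assoc, l1, l2, l3, l4, l6, l8, hz2, hA, hB, hBA, l5, l7])]; simp
    · rw [inv1 (A*B) (z*(A*B)) (by simp [mul_assoc, l1, l2, l3, l4, l6, l8, hz2, hA, hB, hBA, l5, l7])]; simp
    · rw [inv1 (z*(A*B)) (A*B) (by simp [mul_assoc, l1, l2, l3, l4, l6, l8, hz2, hA, hB, hBA, l5, l7])]; simp
  · intro g hg
    simp only [Subgroup.mem_mk, Set.mem_insert_iff, Set.mem_singleton_iff] at hg
    have p4 : ∀ w : G, w^4 = w*w*w*w := fun w => by rw [pow_succ, pow_succ, pow_two]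
    rcases hg with rfl|rfl|rfl|rfl|rfl|rfl|rfl|rfl <;>
      rw [p4] <;>
        simp [mul_assoc, l1, l2, l3, l4, l6, l8, hz2, hA, hB, hBA, l5, l7]
open Matrix
lemma trace3 {F : Type*} [Field F] (h2 : (2:F) ≠ 0)
    (y : Matrix (Fin 2) (Fin 2) F) (hdet : y.det = 1) (h3 : y * y * y = 1) (hy1 : y ≠ 1) :
    y 0 0 + y 1 1 = -1 := by
  have e00 : (y*y*y) 0 0 = (1 : Matrix (Fin 2) (Fin 2) F) 0 0 := by rw [h3]
  have e01 : (y*y*y) 0 1 = (1 : Matrix (Fin 2) (Fin 2) F) 0 1 := by rw [h3]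
  have e10 : (y*y*y) 1 0 = (1 : Matrix (Fin 2) (Fin 2) F) 1 0 := by rw [h3]
  have e11 : (y*y*y) 1 1 = (1 : Matrix (Fin 2) (Fin 2) F) 1 1 := by rw [h3]
  simp only [Matrix.mul_apply, Fin.sum_univ_two, Matrix.one_apply, if_true, if_false,
    Fin.zero_eq_one_iff, Fin.one_eq_zero_iff, ite_true, ite_false, eq_self_iff_true,
    Ne, OfNat.ofNat_ne_one, not_false_iff, one_ne_zero] at e00 e01 e10 e11
  rw [Matrix.det_fin_two] at hdet
  by_contra hne
  have hq : y 0 1 * ((y 0 0 + y 1 1)^2 - 1) = 0 := by linear_combination e01 + y 0 1 * hdet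
  have hr : y 1 0 * ((y 0 0 + y 1 1)^2 - 1) = 0 := by linear_combination e10 + y 1 0 * hdet
  have hpp : y 0 0 * ((y 0 0 + y 1 1)^2 - 1) = (y 0 0 + y 1 1) + 1 := by
    linear_combination e00 + (2 * y 0 0 + y 1 1)*hdet
  have hss : y 1 1 * ((y 0 0 + y 1 1)^2 - 1) = (y 0 0 + y 1 1) + 1 := by
    linear_combination e11 + (2 * y 1 1 + y 0 0)*hdet
  have ht1 : y 0 0 + y 1 1 ≠ 1 := by
    intro h1
    rw [h1] at hpp
    simp at hpp
    exact h2 (by linear_combination -hpp)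
  have htne : (y 0 0 + y 1 1)^2 - 1 ≠ 0 := by
    intro h0
    rcases mul_eq_zero.mp
      (by linear_combination h0 : ((y 0 0 + y 1 1) - 1) * ((y 0 0 + y 1 1) + 1) = 0) with h | h
    · exact ht1 (by linear_combination h)
    · exact hne (by linear_combination h)
  have hq0 : y 0 1 = 0 := by
    rcases mul_eq_zero.mp hq with h | h
    · exact h
    · exact absurd h htne
  have hr0 : y 1 0 = 0 := by
    rcases mul_eq_zero.mp hr with h | h
    · exact h
    · exact absurd h htne
  have hps : y 0 0 = y 1 1 := by
    have h' : (y 0 0 - y 1 1) * ((y 0 0 + y 1 1)^2 - 1) = 0 := by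
      linear_combination hpp - hss
    rcases mul_eq_zero.mp h' with h | h
    · exact sub_eq_zero.mp h
    · exact absurd h htne
  have hp2 : (y 0 0 - 1) * (y 0 0 + 1) = 0 := by
    linear_combination hdet + y 0 0 * hps + y 1 0 * hq0
  rcases mul_eq_zero.mp hp2 with h | h
  · -- y 0 0 = 1, so y = 1, contradiction
    have hp : y 0 0 = 1 := by linear_combination h
    have hs : y 1 1 = 1 := by linear_combination hp - hps
    exact hy1 (by rw [Matrix.eta_fin_two y, hp, hs, hq0, hr0]; exact Matrix.one_fin_two.symm)
  · have hp : y 0 0 = -1 := by linear_combination h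
    have hs : y 1 1 = -1 := by linear_combination hp - hps
    rw [hp, hs] at hpp
    exact h2 (by linear_combination -hpp)

/-- Let `q` be an odd prime power, let `F` be the field with `q` elements, and let `x`
be an element of order 3 in `PSL₂(q) = SL₂(F)/Z(SL₂(F))`. Then `x` normalizes some
nontrivial 2-subgroup of `PSL₂(q)`. -/
theorem PSL2_odd_orderThree_normalizes_two_subgroup
    {F : Type*} [Field F] [Fintype F] (q : ℕ)
    (hq : Odd q) (hq' : IsPrimePow q) (hcard : Fintype.card F = q)
    (x : Matrix.SpecialLinearGroup (Fin 2) F ⧸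
        Subgroup.center (Matrix.SpecialLinearGroup (Fin 2) F))
    (hx : orderOf x = 3) :
    ∃ P : Subgroup (Matrix.SpecialLinearGroup (Fin 2) F ⧸
        Subgroup.center (Matrix.SpecialLinearGroup (Fin 2) F)),
      P ≠ ⊥ ∧ IsPGroup 2 P ∧ x ∈ Subgroup.normalizer (P : Set (Matrix.SpecialLinearGroup (Fin 2) F ⧸
          Subgroup.center (Matrix.SpecialLinearGroup (Fin 2) F))) := by
  set G := Matrix.SpecialLinearGroup (Fin 2) F with hG
  set mk := QuotientGroup.mk' (Subgroup.center G) with hmk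
  have hodd : Fintype.card F % 2 = 1 := by rw [hcard]; exact Nat.odd_iff.mp hq
  have h2 : (2:F) ≠ 0 := by
    intro h
    have hd : ringChar F ∣ 2 := ringChar.dvd (by exact_mod_cast h)
    have hp : (ringChar F).Prime := CharP.char_is_prime F (ringChar F)
    have : ringChar F = 2 := (Nat.prime_dvd_prime_iff_eq hp Nat.prime_two).mp hd
    have := FiniteField.even_card_of_char_two this
    omega
  have hdetneg : (-1 : Matrix (Fin 2) (Fin 2) F).det = 1 := by
    simp [Matrix.det_fin_two]
  set z : G := ⟨-1, hdetneg⟩ with hzdef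
  have hzg : ∀ g : G, z * g = g * z := by
    intro g
    apply Subtype.ext
    show (-1 : Matrix (Fin 2) (Fin 2) F) * g = (g : Matrix (Fin 2) (Fin 2) F) * (-1)
    simp
  have hz2 : z * z = 1 := by
    apply Subtype.ext
    show (-1 : Matrix (Fin 2) (Fin 2) F) * (-1) = 1
    simp
  have hzc : z ∈ Subgroup.center G := Subgroup.mem_center_iff.mpr fun g => (hzg g).symm
  -- the center is {1, z}
  have hcenter : ∀ n : G, n ∈ Subgroup.center G → n = 1 ∨ n = z := by
    intro n hn
    obtain ⟨ρ, hρ2, hρn⟩ := Matrix.SpecialLinearGroup.mem_center_iff.mp hn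
    simp only [Fintype.card_fin] at hρ2
    have : (ρ - 1) * (ρ + 1) = 0 := by linear_combination hρ2
    rcases mul_eq_zero.mp this with h | h
    · left
      apply Subtype.ext
      rw [← hρn, show ρ = 1 by linear_combination h]
      show (Matrix.diagonal fun _ => (1:F)) = 1
      simp
    · right
      apply Subtype.ext
      rw [← hρn, show ρ = -1 by linear_combination h]
      show (Matrix.diagonal fun _ => (-1:F)) = -1
      ext i j
      rcases eq_or_ne i j with rfl|hij
      · simp
      · simp [Matrix.diagonal_apply_ne _ hij, Matrix.one_apply_ne hij]
  -- lift x to Y with Y^3 = 1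
  obtain ⟨X, hX⟩ := QuotientGroup.mk'_surjective (Subgroup.center G) x
  have hx3 : x ^ 3 = 1 := by rw [← hx]; exact pow_orderOf_eq_one x
  have hX3 : X ^ 3 ∈ Subgroup.center G := by
    have hmk3 : mk (X^3) = 1 := by rw [map_pow, hX]; exact hx3
    exact (QuotientGroup.eq_one_iff _).mp hmk3
  have hYex : ∃ Y : G, Y ^ 3 = 1 ∧ mk Y = x := by
    obtain ⟨rr, hrr2, hrrX⟩ := Matrix.SpecialLinearGroup.mem_center_iff.mp hX3
    have hrr : rr = 1 ∨ rr = -1 := by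
      have : (rr - 1) * (rr + 1) = 0 := by
        simp only [Fintype.card_fin] at hrr2
        linear_combination hrr2
      rcases mul_eq_zero.mp this with h | h
      · exact Or.inl (by linear_combination h)
      · exact Or.inr (by linear_combination h)
    rcases hrr with h | h
    · refine ⟨X, ?_, hX⟩
      apply Subtype.ext
      rw [h] at hrrX
      show ((X^3 : G) : Matrix (Fin 2) (Fin 2) F) = 1
      rw [← hrrX]
      show (Matrix.diagonal fun _ => (1:F)) = 1
      simp
    · have hX3z : X^3 = z := by
        apply Subtype.ext
        rw [h] at hrrX
        show ((X^3 : G) : Matrix (Fin 2) (Fin 2) F) = -1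
        rw [← hrrX]
        show (Matrix.diagonal fun _ => (-1:F)) = -1
        ext i j
        rcases eq_or_ne i j with rfl|hij
        · simp
        · simp [Matrix.diagonal_apply_ne _ hij, Matrix.one_apply_ne hij]
      refine ⟨z * X, ?_, ?_⟩
      · have hcomm : Commute z X := hzg X
        rw [hcomm.mul_pow, hX3z, show z^3 = z by rw [pow_succ, pow_two, hz2, one_mul], hz2]
      · show mk z * mk X = x
        have hzone : mk z = 1 := (QuotientGroup.eq_one_iff _).mpr hzc
        rw [hX, hzone, one_mul]
  obtain ⟨Y, hY3, hmkY⟩ := hYex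
  have hY3' : Y * Y * Y = 1 := by rw [← pow_two, ← pow_succ]; exact hY3
  -- matrix level facts about y
  have hy3 : (Y : Matrix (Fin 2) (Fin 2) F) * Y * Y = 1 := by
    have := Subtype.ext_iff.mp hY3'
    exact this
  have hyne : (Y : Matrix (Fin 2) (Fin 2) F) ≠ 1 := by
    intro h
    have hY1 : Y = 1 := Subtype.ext (by simpa using h)
    rw [hY1, MonoidHom.map_one] at hmkY
    rw [← hmkY] at hx
    simp at hx
  have htr : (Y : Matrix (Fin 2) (Fin 2) F) 0 0 + (Y : Matrix (Fin 2) (Fin 2) F) 1 1 = -1 :=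
    trace3 h2 _ Y.prop hy3 hyne
  set y : Matrix (Fin 2) (Fin 2) F := (Y : Matrix (Fin 2) (Fin 2) F) with hydef
  have hdet2 : y 0 0 * y 1 1 - y 0 1 * y 1 0 = 1 := by
    have := Y.prop
    rwa [Matrix.det_fin_two] at this
  have hs : y 1 1 = -1 - y 0 0 := by linear_combination htr
  have hkid : (2 * y 0 0 + 1)^2 + 4*(y 0 1 * y 1 0) = -3 := by
    linear_combination (-4)*hdet2 + 4 * y 0 0 * hs
  have hno : ¬(y 0 1 = 0 ∧ y 1 0 = 0 ∧ 2 * y 0 0 + 1 = 0) := by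
    rintro ⟨hu0, hr0, hk0⟩
    have h3F : (3:F) = 0 := by
      linear_combination hkid - (2 * y 0 0 + 1)*hk0 - 4 * y 1 0 * hu0
    have hp1 : y 0 0 = 1 := by linear_combination (-1)*hk0 + y 0 0 * h3F
    have hs1 : y 1 1 = 1 := by linear_combination hs - hp1 - h3F
    exact hyne (by rw [Matrix.eta_fin_two y, hp1, hs1, hu0, hr0]; exact Matrix.one_fin_two.symm)
  obtain ⟨a, b, c, habc, hline⟩ :=
    key_abc hodd h2 (2 * y 0 0 + 1) (y 0 1) (y 1 0) hkid hno
  -- the element A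
  have hdetA : (!![a, b; c, -a] : Matrix (Fin 2) (Fin 2) F).det = 1 := by
    rw [Matrix.det_fin_two_of]
    linear_combination -habc
  set A : G := ⟨!![a, b; c, -a], hdetA⟩ with hAdef
  have hAA : A * A = z := by
    apply Subtype.ext
    show (!![a, b; c, -a] : Matrix (Fin 2) (Fin 2) F) * !![a, b; c, -a] = -1
    ext i j
    fin_cases i <;> fin_cases j <;>
      simp [Matrix.mul_apply, Matrix.vecMul, Matrix.vecHead, Matrix.vecTail, dotProduct,
        Fin.sum_univ_two, Matrix.one_apply] <;>
      first
        | linear_combination habc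
        | ring
  -- the key matrix identities
  have hM3 : y * !![a, b; c, -a] + !![a, b; c, -a] + !![a, b; c, -a] * y = 1 := by
    ext i j
    fin_cases i <;> fin_cases j <;>
      simp [Matrix.mul_apply, Matrix.vecMul, Matrix.vecHead, Matrix.vecTail, dotProduct,
        Fin.sum_univ_two, Matrix.one_apply] <;>
      first
        | linear_combination hline
        | linear_combination b*hs
        | linear_combination c*hs
        | linear_combination hline - 2*a*hs
  have htrZ : (y * !![a, b; c, -a]) 0 0 + (y * !![a, b; c, -a]) 1 1 = 1 := by
    simp [Matrix.mul_apply, Matrix.vecMul, Matrix.vecHead, Matrix.vecTail, dotProduct,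
      Fin.sum_univ_two]
    linear_combination hline - a*hs
  have hdetZ : (y * !![a, b; c, -a]).det = 1 := by
    rw [Matrix.det_mul, hdetA, Y.prop, one_mul]
  have hZ : (y * !![a, b; c, -a]) * (y * !![a, b; c, -a]) = y * !![a, b; c, -a] - 1 := by
    have := CH2 (y * !![a, b; c, -a])
    rw [htrZ, hdetZ, one_smul, one_smul] at this
    exact this
  have hyy : y * y = -1 - y := by
    have := CH2 y
    rw [htr, Y.prop, one_smul, neg_smul, one_smul] at this
    rw [this]
    noncomm_ring
  have hM4 : (y * !![a, b; c, -a]) * (y * !![a, b; c, -a]) = !![a, b; c, -a] * (y * y) := by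
    rw [hZ, hyy]
    have h1 : y * !![a, b; c, -a] - 1 = -(!![a, b; c, -a]) - !![a, b; c, -a] * y := by
      rw [← hM3]; noncomm_ring
    rw [h1]
    noncomm_ring
  have hKey : (Y * A) * (Y * A) = A * (Y * Y) := by
    exact Subtype.ext hM4
  -- (dsimp only [G]; group)-level derivations
  set B : G := Y * A * Y⁻¹ with hBdef
  have hC : A * B = Y⁻¹ * A * Y := by
    have h1 : Y * (A * B) = A * Y := by
      calc Y * (A * (Y * A * Y⁻¹)) = ((Y * A) * (Y * A)) * Y⁻¹ := by (dsimp only [G]; group)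
        _ = (A * (Y * Y)) * Y⁻¹ := by rw [hKey]
        _ = A * Y := by (dsimp only [G]; group)
    have h2' : Y * (Y⁻¹ * A * Y) = A * Y := by (dsimp only [G]; group)
    exact mul_left_cancel (h1.trans h2'.symm)
  have hBB : B * B = z := by
    have h1 : (Y * A * Y⁻¹) * (Y * A * Y⁻¹) = Y * (A * A) * Y⁻¹ := by (dsimp only [G]; group)
    rw [hBdef, h1, hAA, ← hzg Y]
    (dsimp only [G]; group)
  have hABAB : (A * B) * (A * B) = z := by
    rw [hC]
    have h1 : (Y⁻¹ * A * Y) * (Y⁻¹ * A * Y) = Y⁻¹ * (A * A) * Y := by (dsimp only [G]; group)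
    rw [h1, hAA]
    have h2' : Y⁻¹ * z * Y = z * (Y⁻¹ * Y) := by rw [← hzg Y⁻¹]; (dsimp only [G]; group)
    rw [h2', inv_mul_cancel, mul_one]
  have hAinv : A⁻¹ = z * A := by
    apply inv_eq_of_mul_eq_one_right
    rw [← mul_assoc, ← hzg A, mul_assoc, hAA, hz2]
  have hBinv : B⁻¹ = z * B := by
    apply inv_eq_of_mul_eq_one_right
    rw [← mul_assoc, ← hzg B, mul_assoc, hBB, hz2]
  have hzz : ∀ w : G, z * (z * w) = w := fun w => by rw [← mul_assoc, hz2, one_mul]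
  have hBA : B * A = z * (A * B) := by
    have h1 : B * A = A⁻¹ * (((A * B) * (A * B)) * B⁻¹) := by (dsimp only [G]; group)
    rw [h1, hABAB, hAinv, hBinv, hzz B, mul_assoc]
  have hYY : Y * Y = Y⁻¹ := by
    apply eq_inv_of_mul_eq_one_right
    rw [← mul_assoc]; exact hY3'
  have cjz : Y * z * Y⁻¹ = z := by rw [← hzg Y]; (dsimp only [G]; group)
  have cjA : Y * A * Y⁻¹ = B := hBdef.symm
  have cjB : Y * B * Y⁻¹ = A * B := by
    rw [hC, hBdef]
    have e : Y * (Y * A * Y⁻¹) * Y⁻¹ = (Y * Y) * A * (Y * Y)⁻¹ := by (dsimp only [G]; group)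
    rw [e, hYY, inv_inv]
  have cjAB : Y * (A * B) * Y⁻¹ = A := by
    have e : Y * (A * B) * Y⁻¹ = (Y * A * Y⁻¹) * (Y * B * Y⁻¹) := by (dsimp only [G]; group)
    rw [e, cjA, cjB]
    calc B * (A * B) = (B * A) * B := by rw [← mul_assoc]
      _ = (z * (A * B)) * B := by rw [hBA]
      _ = z * (A * (B * B)) := by rw [mul_assoc, mul_assoc]
      _ = z * (A * z) := by rw [hBB]
      _ = z * (z * A) := by rw [← hzg A]
      _ = A := hzz A
  have cj'z : Y⁻¹ * z * Y = z := by rw [← hzg Y⁻¹]; (dsimp only [G]; group)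
  have cj'A : Y⁻¹ * A * Y = A * B := hC.symm
  have cj'B : Y⁻¹ * B * Y = A := by rw [hBdef]; (dsimp only [G]; group)
  have cj'AB : Y⁻¹ * (A * B) * Y = B := by
    have e : Y⁻¹ * (A * B) * Y = (Y⁻¹ * A * Y) * (Y⁻¹ * B * Y) := by (dsimp only [G]; group)
    rw [e, cj'A, cj'B]
    calc (A * B) * A = A * (B * A) := by rw [mul_assoc]
      _ = A * (z * (A * B)) := by rw [hBA]
      _ = (A * z) * (A * B) := by rw [mul_assoc]
      _ = (z * A) * (A * B) := by rw [← hzg A]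
      _ = z * ((A * A) * B) := by rw [mul_assoc, ← mul_assoc A A B]
      _ = z * (z * B) := by rw [hAA]
      _ = B := hzz B
  obtain ⟨S, hScar, hS4⟩ := quat_subgroup z A B hzg hz2 hAA hBB hBA
  have hmemS : ∀ g : G, g = 1 ∨ g = z ∨ g = A ∨ g = z*A ∨ g = B ∨ g = z*B ∨ g = A*B ∨
      g = z*(A*B) → g ∈ S := by
    intro g hg
    rw [← SetLike.mem_coe, hScar]
    simp only [Set.mem_insert_iff, Set.mem_singleton_iff]
    exact hg
  have hmemS' : ∀ g : G, g ∈ S → g = 1 ∨ g = z ∨ g = A ∨ g = z*A ∨ g = B ∨ g = z*B ∨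
      g = A*B ∨ g = z*(A*B) := by
    intro g hg
    rw [← SetLike.mem_coe, hScar] at hg
    simpa only [Set.mem_insert_iff, Set.mem_singleton_iff] using hg
  have SconjY : ∀ s : G, s ∈ S → Y * s * Y⁻¹ ∈ S := by
    intro s hs
    apply hmemS
    rcases hmemS' s hs with h|h|h|h|h|h|h|h <;> rw [h]
    · rw [show Y * 1 * Y⁻¹ = 1 from by (dsimp only [G]; group)]; exact Or.inl rfl
    · rw [cjz]; exact Or.inr (Or.inl rfl)
    · rw [cjA]; exact Or.inr (Or.inr (Or.inr (Or.inr (Or.inl rfl))))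
    · rw [show Y * (z*A) * Y⁻¹ = (Y * z * Y⁻¹) * (Y * A * Y⁻¹) from by (dsimp only [G]; group), cjz, cjA]
      exact Or.inr (Or.inr (Or.inr (Or.inr (Or.inr (Or.inl rfl)))))
    · rw [cjB]; exact Or.inr (Or.inr (Or.inr (Or.inr (Or.inr (Or.inr (Or.inl rfl))))))
    · rw [show Y * (z*B) * Y⁻¹ = (Y * z * Y⁻¹) * (Y * B * Y⁻¹) from by (dsimp only [G]; group), cjz, cjB]
      exact Or.inr (Or.inr (Or.inr (Or.inr (Or.inr (Or.inr (Or.inr rfl))))))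
    · rw [cjAB]; exact Or.inr (Or.inr (Or.inl rfl))
    · rw [show Y * (z*(A*B)) * Y⁻¹ = (Y * z * Y⁻¹) * (Y * (A*B) * Y⁻¹) from by (dsimp only [G]; group),
        cjz, cjAB]
      exact Or.inr (Or.inr (Or.inr (Or.inl rfl)))
  have SconjY' : ∀ s : G, s ∈ S → Y⁻¹ * s * Y ∈ S := by
    intro s hs
    apply hmemS
    rcases hmemS' s hs with h|h|h|h|h|h|h|h <;> rw [h]
    · rw [show Y⁻¹ * 1 * Y = 1 from by (dsimp only [G]; group)]; exact Or.inl rfl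
    · rw [cj'z]; exact Or.inr (Or.inl rfl)
    · rw [cj'A]; exact Or.inr (Or.inr (Or.inr (Or.inr (Or.inr (Or.inr (Or.inl rfl))))))
    · rw [show Y⁻¹ * (z*A) * Y = (Y⁻¹ * z * Y) * (Y⁻¹ * A * Y) from by (dsimp only [G]; group), cj'z, cj'A]
      exact Or.inr (Or.inr (Or.inr (Or.inr (Or.inr (Or.inr (Or.inr rfl))))))
    · rw [cj'B]; exact Or.inr (Or.inr (Or.inl rfl))
    · rw [show Y⁻¹ * (z*B) * Y = (Y⁻¹ * z * Y) * (Y⁻¹ * B * Y) from by (dsimp only [G]; group), cj'z, cj'B]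
      exact Or.inr (Or.inr (Or.inr (Or.inl rfl)))
    · rw [cj'AB]; exact Or.inr (Or.inr (Or.inr (Or.inr (Or.inl rfl))))
    · rw [show Y⁻¹ * (z*(A*B)) * Y = (Y⁻¹ * z * Y) * (Y⁻¹ * (A*B) * Y) from by (dsimp only [G]; group),
        cj'z, cj'AB]
      exact Or.inr (Or.inr (Or.inr (Or.inr (Or.inr (Or.inl rfl)))))
  refine ⟨S.map mk, ?_, ?_, ?_⟩
  · -- P ≠ ⊥
    intro hbot
    have hAS : A ∈ S := hmemS A (Or.inr (Or.inr (Or.inl rfl)))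
    have hmkA : mk A ∈ S.map mk := Subgroup.mem_map.mpr ⟨A, hAS, rfl⟩
    rw [hbot, Subgroup.mem_bot] at hmkA
    have hActr : A ∈ Subgroup.center G := (QuotientGroup.eq_one_iff A).mp hmkA
    rcases hcenter A hActr with h|h
    · have hval := Subtype.ext_iff.mp h
      have e00 : (!![a, b; c, -a] : Matrix (Fin 2) (Fin 2) F) 0 0
          = (1 : Matrix (Fin 2) (Fin 2) F) 0 0 := by
        rw [show (!![a, b; c, -a] : Matrix (Fin 2) (Fin 2) F) = 1 from hval]
      have e11 : (!![a, b; c, -a] : Matrix (Fin 2) (Fin 2) F) 1 1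
          = (1 : Matrix (Fin 2) (Fin 2) F) 1 1 := by
        rw [show (!![a, b; c, -a] : Matrix (Fin 2) (Fin 2) F) = 1 from hval]
      simp [Matrix.one_apply] at e00 e11
      exact h2 (by linear_combination -e00 - e11)
    · have hval := Subtype.ext_iff.mp h
      have e00 : (!![a, b; c, -a] : Matrix (Fin 2) (Fin 2) F) 0 0
          = (-1 : Matrix (Fin 2) (Fin 2) F) 0 0 := by
        rw [show (!![a, b; c, -a] : Matrix (Fin 2) (Fin 2) F) = -1 from hval]
      have e11 : (!![a, b; c, -a] : Matrix (Fin 2) (Fin 2) F) 1 1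
          = (-1 : Matrix (Fin 2) (Fin 2) F) 1 1 := by
        rw [show (!![a, b; c, -a] : Matrix (Fin 2) (Fin 2) F) = -1 from hval]
      simp [Matrix.one_apply] at e00 e11
      exact h2 (by linear_combination e00 - e11)
  · -- IsPGroup 2
    have hPS : IsPGroup 2 S := by
      intro g
      refine ⟨2, ?_⟩
      apply Subtype.ext
      rw [SubgroupClass.coe_pow, OneMemClass.coe_one]
      rw [show ((2:ℕ)^2) = 4 from rfl]
      exact hS4 (g : G) g.2
    exact hPS.map mk
  · rw [Subgroup.mem_normalizer_iff]
    intro h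
    constructor
    · intro hhP
      obtain ⟨s, hsS, hseq⟩ := Subgroup.mem_map.mp hhP
      rw [← hseq, ← hmkY, ← MonoidHom.map_inv mk Y, ← MonoidHom.map_mul, ← MonoidHom.map_mul]
      exact Subgroup.mem_map.mpr ⟨Y * s * Y⁻¹, SconjY s hsS, rfl⟩
    · intro hhP
      obtain ⟨w, hw⟩ := QuotientGroup.mk'_surjective (Subgroup.center G) h
      rw [← hw, ← hmkY, ← MonoidHom.map_inv mk Y, ← MonoidHom.map_mul, ← MonoidHom.map_mul] at hhP
      obtain ⟨s, hsS, hseq⟩ := Subgroup.mem_map.mp hhP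
      obtain ⟨n, hn, hsn⟩ := (QuotientGroup.mk'_eq_mk' (N := Subgroup.center G)).mp hseq
      have hnS : n ∈ S := by
        rcases hcenter n hn with h'|h' <;> rw [h']
        · exact S.one_mem
        · exact hmemS z (Or.inr (Or.inl rfl))
      have hYw : Y * w * Y⁻¹ ∈ S := by rw [← hsn]; exact S.mul_mem hsS hnS
      have hwS : w ∈ S := by
        have hconj := SconjY' (Y * w * Y⁻¹) hYw
        have e : Y⁻¹ * (Y * w * Y⁻¹) * Y = w := by (dsimp only [G]; group)
        rwa [e] at hconj
      rw [← hw]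
      exact Subgroup.mem_map.mpr ⟨w, hwS, rfl⟩
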